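/- arXiv:1504.02805 — 2 statements merged into one kernel-verified Lean document; each statement's English description precedes it below -/
import Mathlib

section
/- Let g, g', h, h' be bounding functions and let (σ,μ) be a pair of strings. Let B and C be sets of pairs of strings, and suppose that B ∪ C is (g+g', h+h')-big above (σ,μ). Then either B is (g,h)-big above (σ,μ) or C is (g',h')-big above (σ,μ). -/
/-- Strings: finite sequences of natural numbers. -/
abbrev Str := List ℕ

/-- The set of strings extending some element of `A`  (`A^≼`). -/
def above (A : Set Str) : Set Str := {τ | ∃ σ ∈ A, σ <+: τ}

/-- A set of strings is prefix-free if its elements are pairwise incomparable. -/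
def PrefixFree (A : Set Str) : Prop := ∀ σ ∈ A, ∀ τ ∈ A, σ <+: τ → σ = τ

/-- `T` is a tree above `σ`: a nonempty set of extensions of `σ` closed under
initial segments extending `σ`. -/
def IsTreeAbove (σ : Str) (T : Set Str) : Prop :=
  T.Nonempty ∧ (∀ τ ∈ T, σ <+: τ) ∧ ∀ τ ∈ T, ∀ ρ : Str, σ <+: ρ → ρ <+: τ → ρ ∈ T

/-- `T` is a forest above the prefix-free set `A`: `T ⊆ A^≼` contains `A`, and
for each `σ ∈ A`, `T ∩ σ^≼` is a tree above `σ`. -/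
def IsForestAbove (A T : Set Str) : Prop :=
  A ⊆ T ∧ T ⊆ above A ∧ ∀ σ ∈ A, IsTreeAbove σ (T ∩ {τ | σ <+: τ})

/-- `τ` is a leaf (a maximal element) of `T`. -/
def IsLeaf (T : Set Str) (τ : Str) : Prop := τ ∈ T ∧ ∀ ρ ∈ T, τ <+: ρ → ρ = τ

/-- `T` is `h`-bushy: every non-leaf `τ ∈ T` has at least `h |τ|` immediate
successors on `T`. -/
def Bushy (h : ℕ → ℕ) (T : Set Str) : Prop :=
  ∀ τ ∈ T, ¬ IsLeaf T τ →
    h τ.length ≤ {ρ ∈ T | τ <+: ρ ∧ ρ.length = τ.length + 1}.ncard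

/-- `B` is `h`-big above the finite prefix-free set `A`: some finite `h`-bushy
forest above `A` has all of its leaves in `B`. -/
def BigAboveF (h : ℕ → ℕ) (A B : Set Str) : Prop :=
  ∃ T : Set Str, T.Finite ∧ IsForestAbove A T ∧ Bushy h T ∧ ∀ τ : Str, IsLeaf T τ → τ ∈ B

/-- `B` is `h`-big above an arbitrary set `A` of strings: `B` is `h`-big above
every finite prefix-free subset of `A`. -/
def BigAbove (h : ℕ → ℕ) (A B : Set Str) : Prop :=
  ∀ A' : Set Str, A' ⊆ A → A'.Finite → PrefixFree A' → BigAboveF h A' B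

/-- A bounding function: a computable function into `[2, ∞)`. -/
def Bounding (h : ℕ → ℕ) : Prop := Computable h ∧ ∀ n, 2 ≤ h n

/-- The forest `R` is an end-extension of the forest `S`: every string in
`R ∖ S` extends some leaf of `S`. -/
def EndExt (S R : Set Str) : Prop :=
  S ⊆ R ∧ ∀ τ ∈ R, τ ∉ S → ∃ ρ : Str, IsLeaf S ρ ∧ ρ <+: τ

/-- The section `T(τ) = {ρ : (τ, ρ) ∈ T}` of a set of pairs of strings. -/
def sec (T : Set (Str × Str)) (τ : Str) : Set Str := {ρ | (τ, ρ) ∈ T}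

/-- The domain `{τ : T(τ) ≠ ∅}` of a set of pairs of strings. -/
def domP (T : Set (Str × Str)) : Set Str := {τ | ∃ ρ, (τ, ρ) ∈ T}

/-- A set of pairs of strings is prefix-free if its domain is prefix-free and
each of its sections is prefix-free. -/
def PrefixFree2 (A : Set (Str × Str)) : Prop :=
  PrefixFree (domP A) ∧ ∀ τ ∈ domP A, PrefixFree (sec A τ)

/-- A length-2 forest system above the finite prefix-free set `A` of pairs of
strings: `dom T` is a forest above `dom A`; for every `τ ∈ dom T`, `T(τ)` is a
finite forest above `A(τ⁻)`, where `τ⁻` is the (unique) element of `dom A` that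
`τ` extends; and `T(τ')` end-extends `T(τ)` whenever `τ ≼ τ'` in `dom T`. -/
def IsForestSys (A T : Set (Str × Str)) : Prop :=
  IsForestAbove (domP A) (domP T) ∧
  (∀ τ ∈ domP T, (sec T τ).Finite ∧
    ∀ σ ∈ domP A, σ <+: τ → IsForestAbove (sec A σ) (sec T τ)) ∧
  ∀ τ ∈ domP T, ∀ τ' ∈ domP T, τ <+: τ' → EndExt (sec T τ) (sec T τ')

/-- A forest system is `(g, h)`-bushy if its domain is `g`-bushy and each of its
sections is `h`-bushy. -/
def Bushy2 (g h : ℕ → ℕ) (T : Set (Str × Str)) : Prop :=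
  Bushy g (domP T) ∧ ∀ τ ∈ domP T, Bushy h (sec T τ)

/-- A leaf of a forest system: a pair `(τ, ρ)` with `τ` a leaf of `dom T` and
`ρ` a leaf of `T(τ)`. -/
def IsLeaf2 (T : Set (Str × Str)) (p : Str × Str) : Prop :=
  IsLeaf (domP T) p.1 ∧ IsLeaf (sec T p.1) p.2

/-- `B` is `(g, h)`-big above the finite prefix-free set `A` of pairs of
strings: some finite `(g, h)`-bushy forest system above `A` has all of its
leaves in `B`. -/
def BigAboveF2 (g h : ℕ → ℕ) (A B : Set (Str × Str)) : Prop :=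
  ∃ T : Set (Str × Str), T.Finite ∧ IsForestSys A T ∧ Bushy2 g h T ∧
    ∀ p : Str × Str, IsLeaf2 T p → p ∈ B

/-- `B` is `(g, h)`-big above an arbitrary set `A` of pairs of strings: `B` is
`(g, h)`-big above every finite prefix-free subset of `A`. -/
def BigAbove2 (g h : ℕ → ℕ) (A B : Set (Str × Str)) : Prop :=
  ∀ A' : Set (Str × Str), A' ⊆ A → A'.Finite → PrefixFree2 A' → BigAboveF2 g h A' B

/-- A set of pairs of strings is open if it is upwards closed under
coordinatewise extension. -/
def Open2 (C : Set (Str × Str)) : Prop :=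
  ∀ p ∈ C, ∀ q : Str × Str, p.1 <+: q.1 → p.2 <+: q.2 → q ∈ C

/-! ### Auxiliary lemmas -/

lemma prefix_eq_of_length' {l₁ l₂ l₃ : Str} (h₁ : l₁ <+: l₃) (h₂ : l₂ <+: l₃)
    (h : l₁.length = l₂.length) : l₁ = l₂ := by
  rcases List.prefix_or_prefix_of_prefix h₁ h₂ with h' | h'
  · exact h'.eq_of_length h
  · exact (h'.eq_of_length h.symm).symm

lemma prefix_prefix_of_length {l₁ l₂ l₃ : Str} (h₁ : l₁ <+: l₃) (h₂ : l₂ <+: l₃)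
    (h : l₁.length ≤ l₂.length) : l₁ <+: l₂ := by
  rcases List.prefix_or_prefix_of_prefix h₁ h₂ with h' | h'
  · exact h'
  · exact (h'.eq_of_length (le_antisymm h'.length_le h)) ▸ List.prefix_refl _

lemma prefix_antisymm {l₁ l₂ : Str} (h₁ : l₁ <+: l₂) (h₂ : l₂ <+: l₁) : l₁ = l₂ :=
  h₁.eq_of_length (le_antisymm h₁.length_le h₂.length_le)

lemma isLeaf_singleton (σ : Str) : IsLeaf {σ} σ :=
  ⟨rfl, fun ρ hρ _ => hρ⟩

lemma bushy_singleton {h : ℕ → ℕ} {σ : Str} : Bushy h {σ} := by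
  intro τ hτ hnl
  exact absurd (hτ ▸ isLeaf_singleton σ) hnl

lemma forest_singleton (σ : Str) : IsForestAbove {σ} {σ} := by
  refine ⟨subset_rfl, fun τ hτ => ⟨σ, rfl, hτ ▸ List.prefix_refl _⟩, fun σ' hσ' => ?_⟩
  rcases hσ' with rfl
  refine ⟨⟨σ', rfl, List.prefix_refl _⟩, fun τ hτ => hτ.2, fun τ hτ ρ h1 h2 => ?_⟩
  rcases hτ.1 with rfl
  exact ⟨prefix_antisymm h2 h1, h1⟩

lemma bigF_singleton {h : ℕ → ℕ} {σ : Str} {B : Set Str} (hσ : σ ∈ B) :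
    BigAboveF h {σ} B := by
  refine ⟨{σ}, Set.finite_singleton σ, forest_singleton σ, bushy_singleton, fun τ hτ => ?_⟩
  rcases hτ.1 with rfl
  exact hσ

/-- Unpacking a forest above a singleton as a tree. -/
lemma forest_singleton_iff {σ : Str} {T : Set Str} :
    IsForestAbove {σ} T ↔
      σ ∈ T ∧ (∀ τ ∈ T, σ <+: τ) ∧
        ∀ τ ∈ T, ∀ ρ : Str, σ <+: ρ → ρ <+: τ → ρ ∈ T := by
  constructor
  · rintro ⟨h1, h2, h3⟩
    have hext : ∀ τ ∈ T, σ <+: τ := by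
      intro τ hτ
      rcases h2 hτ with ⟨σ', hσ', hpre⟩
      rcases hσ' with rfl
      exact hpre
    refine ⟨h1 rfl, hext, fun τ hτ ρ hρ1 hρ2 => ?_⟩
    exact ((h3 σ rfl).2.2 τ ⟨hτ, hext τ hτ⟩ ρ hρ1 hρ2).1
  · rintro ⟨h1, h2, h3⟩
    refine ⟨fun x hx => hx ▸ h1, fun τ hτ => ⟨σ, rfl, h2 τ hτ⟩, fun σ' hσ' => ?_⟩
    rcases hσ' with rfl
    exact ⟨⟨σ', ⟨h1, List.prefix_refl _⟩⟩, fun τ hτ => hτ.2,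
      fun τ hτ ρ hρ1 hρ2 => ⟨h3 τ hτ.1 ρ hρ1 hρ2, hρ1⟩⟩

/-- Glue lemma: witnesses above sufficiently many children combine to a witness
above the parent. -/
lemma glue {g : ℕ → ℕ} {B : Set Str} {σ : Str} {F : Set Str}
    (hF : F.Finite) (hFne : F.Nonempty)
    (hFext : ∀ ρ ∈ F, σ <+: ρ ∧ ρ.length = σ.length + 1)
    (hcard : g σ.length ≤ F.ncard)
    (hbig : ∀ ρ ∈ F, BigAboveF g {ρ} B) :
    BigAboveF g {σ} B := by
  classical
  choose! S hSfin hSforest hSbushy hSleaf using hbig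
  -- basic facts about the witness trees
  have hSmem : ∀ ρ ∈ F, ρ ∈ S ρ := fun ρ hρ => (forest_singleton_iff.1 (hSforest ρ hρ)).1
  have hSext : ∀ ρ ∈ F, ∀ τ ∈ S ρ, ρ <+: τ :=
    fun ρ hρ => (forest_singleton_iff.1 (hSforest ρ hρ)).2.1
  set T' : Set Str := insert σ (⋃ ρ ∈ F, S ρ) with hT'def
  have hmem : ∀ τ, τ ∈ T' ↔ τ = σ ∨ ∃ ρ ∈ F, τ ∈ S ρ := by
    intro τ; simp [hT'def]
  have hT'fin : T'.Finite :=
    (Set.Finite.biUnion hF (fun ρ hρ => hSfin ρ hρ)).insert σ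
  have hT'ext : ∀ τ ∈ T', σ <+: τ := by
    intro τ hτ
    rcases (hmem τ).1 hτ with rfl | ⟨ρ, hρ, hτρ⟩
    · exact List.prefix_refl _
    · exact (hFext ρ hρ).1.trans (hSext ρ hρ τ hτρ)
  -- extensions of elements of `S ρ` within `T'` stay in `S ρ`
  have hclaim : ∀ ρ ∈ F, ∀ τ ∈ S ρ, ∀ τ' ∈ T', τ <+: τ' → τ' ∈ S ρ := by
    intro ρ hρ τ hτ τ' hτ' hpre
    rcases (hmem τ').1 hτ' with rfl | ⟨ρ', hρ', hτ'ρ⟩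
    · exfalso
      have h1 : ρ <+: τ' := (hSext ρ hρ τ hτ).trans hpre
      have h2 := h1.length_le
      have h3 := (hFext ρ hρ).2
      omega
    · have h1 : ρ <+: τ' := (hSext ρ hρ τ hτ).trans hpre
      have h2 : ρ' <+: τ' := hSext ρ' hρ' τ' hτ'ρ
      have : ρ = ρ' := prefix_eq_of_length' h1 h2 (by rw [(hFext ρ hρ).2, (hFext ρ' hρ').2])
      exact this ▸ hτ'ρ
  refine ⟨T', hT'fin, ?_, ?_, ?_⟩
  · -- forest above {σ}
    refine forest_singleton_iff.2 ⟨(hmem σ).2 (Or.inl rfl), hT'ext, ?_⟩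
    intro τ hτ π hπ1 hπ2
    rcases (hmem τ).1 hτ with rfl | ⟨ρ, hρ, hτρ⟩
    · exact (hmem π).2 (Or.inl (prefix_antisymm hπ2 hπ1))
    · by_cases hlen : π.length ≤ σ.length
      · have : σ = π := hπ1.eq_of_length (le_antisymm hπ1.length_le hlen)
        exact (hmem π).2 (Or.inl this.symm)
      · have hρτ : ρ <+: τ := hSext ρ hρ τ hτρ
        have hρπ : ρ <+: π := by
          refine prefix_prefix_of_length (hρτ) (hπ2) ?_
          rw [(hFext ρ hρ).2]; omega
        exact (hmem π).2 (Or.inr ⟨ρ, hρ, (forest_singleton_iff.1 (hSforest ρ hρ)).2.2 τ hτρ π hρπ hπ2⟩)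
  · -- bushy
    intro τ hτ hnl
    rcases (hmem τ).1 hτ with rfl | ⟨ρ, hρ, hτρ⟩
    · -- τ = σ : children include F
      have hsub : F ⊆ {x ∈ T' | τ <+: x ∧ x.length = τ.length + 1} := by
        intro ρ hρ
        exact ⟨(hmem ρ).2 (Or.inr ⟨ρ, hρ, hSmem ρ hρ⟩), (hFext ρ hρ).1, (hFext ρ hρ).2⟩
      calc g τ.length ≤ F.ncard := hcard
        _ ≤ _ := Set.ncard_le_ncard hsub (hT'fin.subset (Set.sep_subset _ _))
    · -- τ in some S ρ
      have hsucc : {x ∈ T' | τ <+: x ∧ x.length = τ.length + 1}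
          = {x ∈ S ρ | τ <+: x ∧ x.length = τ.length + 1} := by
        ext x
        constructor
        · rintro ⟨hx, hpre, hlen⟩
          exact ⟨hclaim ρ hρ τ hτρ x hx hpre, hpre, hlen⟩
        · rintro ⟨hx, hpre, hlen⟩
          exact ⟨(hmem x).2 (Or.inr ⟨ρ, hρ, hx⟩), hpre, hlen⟩
      have hnl' : ¬ IsLeaf (S ρ) τ := by
        intro hlf
        apply hnl
        refine ⟨hτ, fun τ' hτ' hpre => ?_⟩
        exact hlf.2 τ' (hclaim ρ hρ τ hτρ τ' hτ' hpre) hpre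
      rw [hsucc]
      exact hSbushy ρ hρ τ hτρ hnl'
  · -- leaves
    intro τ hlf
    have hτ : τ ∈ T' := hlf.1
    rcases (hmem τ).1 hτ with rfl | ⟨ρ, hρ, hτρ⟩
    · exfalso
      obtain ⟨ρ₀, hρ₀⟩ := hFne
      have h1 : ρ₀ ∈ T' := (hmem ρ₀).2 (Or.inr ⟨ρ₀, hρ₀, hSmem ρ₀ hρ₀⟩)
      have h2 := hlf.2 ρ₀ h1 (hFext ρ₀ hρ₀).1
      have := (hFext ρ₀ hρ₀).2
      rw [h2] at this
      omega
    · refine hSleaf ρ hρ τ ⟨hτρ, fun τ' hτ' hpre => ?_⟩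
      exact hlf.2 τ' ((hmem τ').2 (Or.inr ⟨ρ, hρ, hτ'⟩)) hpre

/-- One-dimensional big subset property above a single string. -/
lemma one_dim (g g' : ℕ → ℕ) (hg : ∀ n, 1 ≤ g n) (hg' : ∀ n, 1 ≤ g' n)
    (B C : Set Str) :
    ∀ n : ℕ, ∀ σ : Str, ∀ T : Set Str, T.Finite → T.ncard ≤ n →
      IsForestAbove {σ} T → Bushy (fun n => g n + g' n) T →
      (∀ τ, IsLeaf T τ → τ ∈ B ∪ C) →
      BigAboveF g {σ} B ∨ BigAboveF g' {σ} C := by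
  intro n
  induction n with
  | zero =>
    intro σ T hfin hcard hforest _ _
    exfalso
    have hσ : σ ∈ T := (forest_singleton_iff.1 hforest).1
    have : T.ncard ≠ 0 := by
      intro h0
      rw [Set.ncard_eq_zero hfin] at h0
      exact absurd (h0 ▸ hσ) (Set.notMem_empty σ)
    omega
  | succ n ih =>
    intro σ T hfin hcard hforest hbushy hleaf
    obtain ⟨hσT, hText, hTcl⟩ := forest_singleton_iff.1 hforest
    by_cases hlf : IsLeaf T σ
    · rcases hleaf σ hlf with hB | hB
      · exact Or.inl (bigF_singleton hB)
      · exact Or.inr (bigF_singleton hB)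
    · -- σ has many children
      set Ch : Set Str := {ρ ∈ T | σ <+: ρ ∧ ρ.length = σ.length + 1} with hChdef
      have hChsub : Ch ⊆ T := Set.sep_subset _ _
      have hChfin : Ch.Finite := hfin.subset hChsub
      have hChcard : g σ.length + g' σ.length ≤ Ch.ncard := hbushy σ hσT hlf
      -- each child gives a big witness
      have hchild : ∀ ρ ∈ Ch, BigAboveF g {ρ} B ∨ BigAboveF g' {ρ} C := by
        intro ρ hρ
        obtain ⟨hρT, hρpre, hρlen⟩ := hρ
        set Tρ : Set Str := T ∩ {τ | ρ <+: τ} with hTρdef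
        have hTρsub : Tρ ⊆ T := Set.inter_subset_left
        have hTρfin : Tρ.Finite := hfin.subset hTρsub
        have hσnot : σ ∉ Tρ := by
          rintro ⟨-, hpre⟩
          have := hpre.length_le
          omega
        have hTρcard : Tρ.ncard ≤ n := by
          have hss : Tρ ⊂ T := ⟨hTρsub, fun h => hσnot (h hσT)⟩
          have := Set.ncard_lt_ncard hss hfin
          omega
        have hTρforest : IsForestAbove {ρ} Tρ := by
          refine forest_singleton_iff.2 ⟨⟨hρT, List.prefix_refl _⟩,
            fun τ hτ => hτ.2, fun τ hτ π hπ1 hπ2 => ?_⟩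
          exact ⟨hTcl τ hτ.1 π (hρpre.trans hπ1) hπ2, hπ1⟩
        have hTρleaf : ∀ τ, IsLeaf Tρ τ → IsLeaf T τ := by
          intro τ hτ
          refine ⟨hτ.1.1, fun τ' hτ' hpre => ?_⟩
          exact hτ.2 τ' ⟨hτ', hτ.1.2.trans hpre⟩ hpre
        have hTρbushy : Bushy (fun n => g n + g' n) Tρ := by
          intro τ hτ hnl
          have hnl' : ¬ IsLeaf T τ := by
            intro hlf'
            exact hnl ⟨hτ, fun τ' hτ' hpre => hlf'.2 τ' (hTρsub hτ') hpre⟩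
          have hsucc : {x ∈ T | τ <+: x ∧ x.length = τ.length + 1}
              = {x ∈ Tρ | τ <+: x ∧ x.length = τ.length + 1} := by
            ext x
            constructor
            · rintro ⟨hx, hpre, hlen⟩
              exact ⟨⟨hx, hτ.2.trans hpre⟩, hpre, hlen⟩
            · rintro ⟨hx, hpre, hlen⟩
              exact ⟨hx.1, hpre, hlen⟩
          have := hbushy τ (hTρsub hτ) hnl'
          rwa [hsucc] at this
        exact ih ρ Tρ hTρfin hTρcard hTρforest hTρbushy
          (fun τ hτ => hleaf τ (hTρleaf τ hτ))
      -- pigeonhole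
      set ChB : Set Str := {ρ ∈ Ch | BigAboveF g {ρ} B} with hChBdef
      set ChC : Set Str := {ρ ∈ Ch | BigAboveF g' {ρ} C} with hChCdef
      have hcover : Ch ⊆ ChB ∪ ChC := by
        intro ρ hρ
        rcases hchild ρ hρ with h | h
        · exact Or.inl ⟨hρ, h⟩
        · exact Or.inr ⟨hρ, h⟩
      have hsum : Ch.ncard ≤ ChB.ncard + ChC.ncard :=
        le_trans (Set.ncard_le_ncard hcover ((hChfin.subset (Set.sep_subset _ _)).union
          (hChfin.subset (Set.sep_subset _ _)))) (Set.ncard_union_le _ _)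
      have hcase : g σ.length ≤ ChB.ncard ∨ g' σ.length ≤ ChC.ncard := by omega
      rcases hcase with hcase | hcase
      · left
        have hne : ChB.Nonempty :=
          Set.nonempty_of_ncard_ne_zero (by have := hg σ.length; omega)
        exact glue (hChfin.subset (Set.sep_subset _ _)) hne
          (fun ρ hρ => hρ.1.2) hcase (fun ρ hρ => hρ.2)
      · right
        have hne : ChC.Nonempty :=
          Set.nonempty_of_ncard_ne_zero (by have := hg' σ.length; omega)
        exact glue (hChfin.subset (Set.sep_subset _ _)) hne
          (fun ρ hρ => hρ.1.2) hcase (fun ρ hρ => hρ.2)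

lemma domP_pair (σ μ : Str) : domP {(σ, μ)} = {σ} := by
  ext τ
  simp [domP, Prod.ext_iff, eq_comm]

lemma sec_pair (σ μ : Str) : sec {(σ, μ)} σ = {μ} := by
  ext ρ
  simp [sec, Prod.ext_iff, eq_comm]

lemma endExt_refl (X : Set Str) : EndExt X X :=
  ⟨subset_rfl, fun τ hτ hn => absurd hτ hn⟩

/-- Assembly: a bushy domain tree whose leaves all carry bushy section
witnesses yields a bushy forest system. -/
lemma assemble (g h : ℕ → ℕ) (σ μ : Str) (B : Set (Str × Str))
    (hbig : BigAboveF g {σ} {τ | BigAboveF h {μ} (sec B τ)}) :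
    BigAboveF2 g h {(σ, μ)} B := by
  classical
  obtain ⟨S, hSfin, hSforest, hSbushy, hSleaf⟩ := hbig
  set W : Str → Set Str := fun τ =>
    if hτ : IsLeaf S τ then Classical.choose (hSleaf τ hτ) else {μ} with hWdef
  have hW : ∀ τ, (W τ).Finite ∧ IsForestAbove {μ} (W τ) ∧ Bushy h (W τ) ∧
      (IsLeaf S τ → ∀ ρ, IsLeaf (W τ) ρ → (τ, ρ) ∈ B) := by
    intro τ
    by_cases hτ : IsLeaf S τ
    · have hspec := Classical.choose_spec (hSleaf τ hτ)
      simp only [hWdef, dif_pos hτ]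
      exact ⟨hspec.1, hspec.2.1, hspec.2.2.1, fun _ ρ hρ => hspec.2.2.2 ρ hρ⟩
    · simp only [hWdef, dif_neg hτ]
      exact ⟨Set.finite_singleton μ, forest_singleton μ, bushy_singleton,
        fun h' => absurd h' hτ⟩
  have hWμ : ∀ τ, μ ∈ W τ := fun τ => (forest_singleton_iff.1 (hW τ).2.1).1
  have hWnonleaf : ∀ τ, ¬ IsLeaf S τ → W τ = {μ} := by
    intro τ hτ
    simp only [hWdef, dif_neg hτ]
  set T' : Set (Str × Str) := {p | p.1 ∈ S ∧ p.2 ∈ W p.1} with hT'def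
  have hdom : domP T' = S := by
    ext τ
    constructor
    · rintro ⟨ρ, hρ, -⟩
      exact hρ
    · intro hτ
      exact ⟨μ, hτ, hWμ τ⟩
  have hsec : ∀ τ ∈ S, sec T' τ = W τ := by
    intro τ hτ
    ext ρ
    exact ⟨fun hρ => hρ.2, fun hρ => ⟨hτ, hρ⟩⟩
  refine ⟨T', ?_, ?_, ?_, ?_⟩
  · -- finite
    refine Set.Finite.subset (Set.Finite.biUnion hSfin
      (fun τ _ => ((hW τ).1.image (Prod.mk τ)))) ?_
    rintro ⟨τ, ρ⟩ ⟨hτ, hρ⟩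
    exact Set.mem_biUnion hτ ⟨ρ, hρ, rfl⟩
  · -- forest system
    refine ⟨?_, ?_, ?_⟩
    · rw [domP_pair, hdom]; exact hSforest
    · intro τ hτ
      rw [hdom] at hτ
      rw [hsec τ hτ]
      refine ⟨(hW τ).1, fun σ' hσ' hpre => ?_⟩
      rw [domP_pair] at hσ'
      rcases hσ' with rfl
      rw [sec_pair]
      exact (hW τ).2.1
    · intro τ hτ τ' hτ' hpre
      rw [hdom] at hτ hτ'
      rw [hsec τ hτ, hsec τ' hτ']
      by_cases heq : τ' = τ
      · rw [heq]; exact endExt_refl _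
      · have hnl : ¬ IsLeaf S τ := fun hlf => heq (hlf.2 τ' hτ' hpre)
        rw [hWnonleaf τ hnl]
        refine ⟨fun x hx => hx ▸ hWμ τ', fun ρ hρ hρn => ?_⟩
        exact ⟨μ, isLeaf_singleton μ, (forest_singleton_iff.1 (hW τ').2.1).2.1 ρ hρ⟩
  · -- bushy
    refine ⟨?_, ?_⟩
    · rw [hdom]; exact hSbushy
    · intro τ hτ
      rw [hdom] at hτ
      rw [hsec τ hτ]
      exact (hW τ).2.2.1
  · -- leaves
    rintro ⟨τ, ρ⟩ ⟨hτlf, hρlf⟩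
    rw [hdom] at hτlf
    rw [hsec τ hτlf.1] at hρlf
    exact (hW τ).2.2.2 hτlf ρ hρlf

/-- Big subset property for pairs: if `B ∪ C` is `(g+g', h+h')`-big above the
pair `(σ, μ)`, then `B` is `(g, h)`-big above `(σ, μ)` or `C` is `(g', h')`-big
above `(σ, μ)`. -/
theorem big_subset_property_pairs (g g' h h' : ℕ → ℕ)
    (hg : Bounding g) (hg' : Bounding g') (hh : Bounding h) (hh' : Bounding h')
    (σ μ : Str) (B C : Set (Str × Str))
    (hbig : BigAboveF2 (fun n => g n + g' n) (fun n => h n + h' n) {(σ, μ)} (B ∪ C)) :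
    BigAboveF2 g h {(σ, μ)} B ∨ BigAboveF2 g' h' {(σ, μ)} C := by
  classical
  have hg1 : ∀ n, 1 ≤ g n := fun n => le_trans one_le_two (hg.2 n)
  have hg'1 : ∀ n, 1 ≤ g' n := fun n => le_trans one_le_two (hg'.2 n)
  have hh1 : ∀ n, 1 ≤ h n := fun n => le_trans one_le_two (hh.2 n)
  have hh'1 : ∀ n, 1 ≤ h' n := fun n => le_trans one_le_two (hh'.2 n)
  obtain ⟨T, hTfin, hTsys, hTbushy, hTleaf⟩ := hbig
  set D : Set Str := domP T with hDdef
  have hDfin : D.Finite := by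
    refine (hTfin.image Prod.fst).subset ?_
    rintro τ ⟨ρ, hρ⟩
    exact ⟨(τ, ρ), hρ, rfl⟩
  have hDforest : IsForestAbove {σ} D := by
    have := hTsys.1
    rwa [domP_pair] at this
  -- every leaf of the domain has a big section on one side
  have hsecbig : ∀ τ, IsLeaf D τ →
      τ ∈ {τ | BigAboveF h {μ} (sec B τ)} ∪ {τ | BigAboveF h' {μ} (sec C τ)} := by
    intro τ hτlf
    have hτD : τ ∈ D := hτlf.1
    have hστ : σ <+: τ := (forest_singleton_iff.1 hDforest).2.1 τ hτD
    have hsecfin : (sec T τ).Finite := (hTsys.2.1 τ hτD).1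
    have hsecforest : IsForestAbove {μ} (sec T τ) := by
      have := (hTsys.2.1 τ hτD).2 σ (by rw [domP_pair]; rfl) hστ
      rwa [sec_pair] at this
    have hsecbushy : Bushy (fun n => h n + h' n) (sec T τ) := hTbushy.2 τ hτD
    have hsecleaf : ∀ ρ, IsLeaf (sec T τ) ρ →
        ρ ∈ sec B τ ∪ sec C τ := by
      intro ρ hρlf
      have : (τ, ρ) ∈ B ∪ C := hTleaf (τ, ρ) ⟨hτlf, hρlf⟩
      rcases this with hB | hB
      · exact Or.inl hB
      · exact Or.inr hB
    exact one_dim h h' hh1 hh'1 (sec B τ) (sec C τ) (sec T τ).ncard μ (sec T τ)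
      hsecfin le_rfl hsecforest hsecbushy hsecleaf
  have hmain := one_dim g g' hg1 hg'1
    {τ | BigAboveF h {μ} (sec B τ)} {τ | BigAboveF h' {μ} (sec C τ)}
    D.ncard σ D hDfin le_rfl hDforest (hDdef ▸ hTbushy.1) hsecbig
  rcases hmain with hm | hm
  · exact Or.inl (assemble g h σ μ B hm)
  · exact Or.inr (assemble g' h' σ μ C hm)
end

section
/- (Weak concatenation property for pairs) Let A, B, C be sets of pairs of strings with C open, and let g, h be bounding functions. Suppose that B is (g,h)-big above A, and that for every (τ,ρ) ∈ B and every string τ' extending τ, C is (g,h)-big above the pair (τ',ρ). Then C is (g,h)-big above A. -/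
section WCAux

-- toolkit
lemma pftot {a b c : Str} (h1 : a <+: c) (h2 : b <+: c) : a <+: b ∨ b <+: a :=
  List.prefix_or_prefix_of_prefix h1 h2

lemma pfanti {a b : Str} (h1 : a <+: b) (h2 : b <+: a) : a = b :=
  h1.eq_of_length (le_antisymm h1.length_le h2.length_le)

def leavesOf (T : Set Str) : Set Str := {τ | IsLeaf T τ}

lemma leavesOf_subset (T : Set Str) : leavesOf T ⊆ T := fun _ h => h.1

lemma isLeaf_mono {S T : Set Str} (hST : S ⊆ T) {x : Str} (hx : x ∈ S) (h : IsLeaf T x) :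
    IsLeaf S x := ⟨hx, fun ρ hρ hpre => h.2 ρ (hST hρ) hpre⟩

lemma exists_leaf_above {T : Set Str} (hfin : T.Finite) {τ : Str} (hτ : τ ∈ T) :
    ∃ ℓ, IsLeaf T ℓ ∧ τ <+: ℓ := by
  obtain ⟨ℓ, hℓ, hmax⟩ := Set.Finite.exists_maximalFor List.length {ρ ∈ T | τ <+: ρ}
    (hfin.subset (Set.sep_subset _ _)) ⟨τ, hτ, List.prefix_rfl⟩
  refine ⟨ℓ, ⟨hℓ.1, fun ρ hρ hpre => ?_⟩, hℓ.2⟩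
  exact (hpre.eq_of_length (le_antisymm hpre.length_le (hmax (j := ρ) ⟨hρ, hℓ.2.trans hpre⟩ hpre.length_le))).symm

lemma leavesOf_prefixFree (T : Set Str) : PrefixFree (leavesOf T) :=
  fun _σ hσ τ hτ hpre => (hσ.2 τ hτ.1 hpre).symm

lemma prefixFree_mono {A B : Set Str} (h : B ⊆ A) (hA : PrefixFree A) : PrefixFree B :=
  fun σ hσ τ hτ => hA σ (h hσ) τ (h hτ)

lemma isLeaf_of_prefixFree {A : Set Str} (hA : PrefixFree A) {a : Str} (ha : a ∈ A) :
    IsLeaf A a := ⟨ha, fun ρ hρ hpre => (hA a ha ρ hρ hpre).symm⟩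

lemma forest_self {A : Set Str} (hA : PrefixFree A) : IsForestAbove A A := by
  refine ⟨subset_rfl, fun τ hτ => ⟨τ, hτ, List.prefix_rfl⟩, fun σ hσ => ?_⟩
  have he : A ∩ {τ | σ <+: τ} = {σ} := by
    ext x
    constructor
    · rintro ⟨hx, hpre⟩; exact ((hA σ hσ x hx hpre).symm : x = σ)
    · rintro rfl; exact ⟨hσ, List.prefix_rfl⟩
  rw [he]
  exact ⟨⟨σ, rfl⟩, fun τ hτ => hτ ▸ List.prefix_rfl,
    fun τ hτ ρ h1 h2 => by rw [Set.mem_singleton_iff] at hτ ⊢; exact pfanti (hτ ▸ h2) h1⟩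

lemma bushy_self {A : Set Str} (hA : PrefixFree A) (h : ℕ → ℕ) : Bushy h A :=
  fun τ hτ hnl => absurd (isLeaf_of_prefixFree hA hτ) hnl

lemma leavesOf_self {A : Set Str} (hA : PrefixFree A) : leavesOf A = A :=
  subset_antisymm (leavesOf_subset A) (fun _ ha => isLeaf_of_prefixFree hA ha)

section UnionForest

variable {ι : Type} {s : Set ι} {Ab F : ι → Set Str}

lemma union_local (hcross : ∀ i ∈ s, ∀ j ∈ s, i ≠ j → ∀ x ∈ F i, ∀ y ∈ F j, ¬ x <+: y)
    {i : ι} (hi : i ∈ s) {x : Str} (hx : x ∈ F i) {y : Str} (hy : y ∈ ⋃ j ∈ s, F j)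
    (hpre : x <+: y) : y ∈ F i := by
  obtain ⟨j, hj, hyj⟩ : ∃ j ∈ s, y ∈ F j := by simpa using hy
  by_cases hij : i = j
  · exact hij ▸ hyj
  · exact absurd hpre (hcross i hi j hj hij x hx y hyj)

lemma union_isLeaf (hcross : ∀ i ∈ s, ∀ j ∈ s, i ≠ j → ∀ x ∈ F i, ∀ y ∈ F j, ¬ x <+: y)
    {i : ι} (hi : i ∈ s) {x : Str} (hx : x ∈ F i) :
    IsLeaf (⋃ j ∈ s, F j) x ↔ IsLeaf (F i) x := by
  constructor
  · exact fun h => isLeaf_mono (Set.subset_biUnion_of_mem hi) hx h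
  · exact fun h => ⟨Set.mem_biUnion hi hx,
      fun ρ hρ hpre => h.2 ρ (union_local hcross hi hx hρ hpre) hpre⟩

lemma union_forestAbove
    (hcross : ∀ i ∈ s, ∀ j ∈ s, i ≠ j → ∀ x ∈ F i, ∀ y ∈ F j, ¬ x <+: y)
    (hfor : ∀ i ∈ s, IsForestAbove (Ab i) (F i)) :
    IsForestAbove (⋃ i ∈ s, Ab i) (⋃ i ∈ s, F i) := by
  refine ⟨?_, ?_, ?_⟩
  · intro a ha
    obtain ⟨i, hi, hai⟩ : ∃ i ∈ s, a ∈ Ab i := by simpa using ha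
    exact Set.mem_biUnion hi ((hfor i hi).1 hai)
  · intro x hx
    obtain ⟨i, hi, hxi⟩ : ∃ i ∈ s, x ∈ F i := by simpa using hx
    obtain ⟨a, hai, hpre⟩ := (hfor i hi).2.1 hxi
    exact ⟨a, Set.mem_biUnion hi hai, hpre⟩
  · intro σ hσ
    obtain ⟨i, hi, hσi⟩ : ∃ i ∈ s, σ ∈ Ab i := by simpa using hσ
    have heq : (⋃ j ∈ s, F j) ∩ {τ | σ <+: τ} = F i ∩ {τ | σ <+: τ} := by
      ext y
      constructor
      · rintro ⟨hy, hpre⟩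
        exact ⟨union_local hcross hi ((hfor i hi).1 hσi) hy hpre, hpre⟩
      · rintro ⟨hy, hpre⟩
        exact ⟨Set.mem_biUnion hi hy, hpre⟩
    rw [heq]
    exact (hfor i hi).2.2 σ hσi

lemma union_leavesOf
    (hcross : ∀ i ∈ s, ∀ j ∈ s, i ≠ j → ∀ x ∈ F i, ∀ y ∈ F j, ¬ x <+: y) :
    leavesOf (⋃ i ∈ s, F i) = ⋃ i ∈ s, leavesOf (F i) := by
  ext x
  constructor
  · intro hx
    obtain ⟨i, hi, hxi⟩ : ∃ i ∈ s, x ∈ F i := by simpa using hx.1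
    exact Set.mem_biUnion hi ((union_isLeaf hcross hi hxi).mp hx)
  · intro hx
    obtain ⟨i, hi, hxi⟩ : ∃ i ∈ s, x ∈ leavesOf (F i) := by simpa using hx
    exact (union_isLeaf hcross hi hxi.1).mpr hxi

lemma union_bushy {h : ℕ → ℕ}
    (hcross : ∀ i ∈ s, ∀ j ∈ s, i ≠ j → ∀ x ∈ F i, ∀ y ∈ F j, ¬ x <+: y)
    (hbushy : ∀ i ∈ s, Bushy h (F i)) : Bushy h (⋃ i ∈ s, F i) := by
  intro τ hτ hnl
  obtain ⟨i, hi, hτi⟩ : ∃ i ∈ s, τ ∈ F i := by simpa using hτ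
  have hset : {ρ ∈ ⋃ j ∈ s, F j | τ <+: ρ ∧ ρ.length = τ.length + 1}
      = {ρ ∈ F i | τ <+: ρ ∧ ρ.length = τ.length + 1} := by
    ext ρ
    constructor
    · rintro ⟨hρ, hpre, hlen⟩; exact ⟨union_local hcross hi hτi hρ hpre, hpre, hlen⟩
    · rintro ⟨hρ, hpre, hlen⟩; exact ⟨Set.mem_biUnion hi hρ, hpre, hlen⟩
  rw [hset]
  exact hbushy i hi τ hτi (fun hl => hnl ((union_isLeaf hcross hi hτi).mpr hl))

end UnionForest

section Graft

variable {A F G : Set Str}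

lemma graft_forestAbove (hF : IsForestAbove A F) (hG : IsForestAbove (leavesOf F) G) :
    IsForestAbove A (F ∪ G) := by
  refine ⟨fun a ha => Or.inl (hF.1 ha), ?_, ?_⟩
  · rintro x (hx | hx)
    · exact hF.2.1 hx
    · obtain ⟨ℓ, hℓ, hlx⟩ := hG.2.1 hx
      obtain ⟨a, ha, hal⟩ := hF.2.1 hℓ.1
      exact ⟨a, ha, hal.trans hlx⟩
  · intro σ hσ
    refine ⟨⟨σ, Or.inl (hF.1 hσ), List.prefix_rfl⟩, fun τ hτ => hτ.2, ?_⟩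
    rintro x ⟨hx | hx, hσx⟩ ρ hσρ hρx
    · exact ⟨Or.inl ((hF.2.2 σ hσ).2.2 x ⟨hx, hσx⟩ ρ hσρ hρx).1, hσρ⟩
    · obtain ⟨ℓ, hℓ, hlx⟩ := hG.2.1 hx
      rcases pftot hρx hlx with hρl | hlρ
      · have hσl : σ <+: ℓ := hσρ.trans hρl
        exact ⟨Or.inl ((hF.2.2 σ hσ).2.2 ℓ ⟨hℓ.1, hσl⟩ ρ hσρ hρl).1, hσρ⟩
      · exact ⟨Or.inr ((hG.2.2 ℓ hℓ).2.2 x ⟨hx, hlx⟩ ρ hlρ hρx).1, hσρ⟩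

lemma graft_leaf_G (hG : IsForestAbove (leavesOf F) G) {x : Str} (hx : IsLeaf G x) :
    IsLeaf (F ∪ G) x := by
  refine ⟨Or.inr hx.1, ?_⟩
  rintro ρ (hρ | hρ) hpre
  · obtain ⟨ℓ, hℓ, hlx⟩ := hG.2.1 hx.1
    have hρℓ : ρ = ℓ := hℓ.2 ρ hρ (hlx.trans hpre)
    rw [hρℓ]
    exact pfanti hlx (hρℓ ▸ hpre)
  · exact hx.2 ρ hρ hpre

lemma graft_leavesOf (hG : IsForestAbove (leavesOf F) G) :
    leavesOf (F ∪ G) = leavesOf G := by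
  ext x
  constructor
  · intro hx
    have hxG : x ∈ G := by
      rcases hx.1 with hxF | hxG
      · exact hG.1 (isLeaf_mono Set.subset_union_left hxF hx)
      · exact hxG
    exact isLeaf_mono Set.subset_union_right hxG hx
  · exact fun hx => graft_leaf_G hG hx

lemma graft_endExt (hG : IsForestAbove (leavesOf F) G) : EndExt F (F ∪ G) := by
  refine ⟨Set.subset_union_left, ?_⟩
  rintro x (hx | hx) hnx
  · exact absurd hx hnx
  · obtain ⟨ℓ, hℓ, hlx⟩ := hG.2.1 hx
    exact ⟨ℓ, hℓ, hlx⟩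

lemma graft_bushy {h : ℕ → ℕ} (hG : IsForestAbove (leavesOf F) G)
    (hfin : (F ∪ G).Finite) (hbF : Bushy h F) (hbG : Bushy h G) : Bushy h (F ∪ G) := by
  intro τ hτ hnl
  have key : ∀ T' : Set Str, T' ⊆ F ∪ G → Bushy h T' → τ ∈ T' → ¬ IsLeaf T' τ →
      h τ.length ≤ {ρ ∈ F ∪ G | τ <+: ρ ∧ ρ.length = τ.length + 1}.ncard := by
    intro T' hsub hb hτ' hnl'
    calc h τ.length ≤ {ρ ∈ T' | τ <+: ρ ∧ ρ.length = τ.length + 1}.ncard := hb τ hτ' hnl'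
      _ ≤ _ := by
        apply Set.ncard_le_ncard
        · rintro ρ ⟨hm, hp⟩
          exact ⟨hsub hm, hp⟩
        · exact hfin.subset (fun ρ hρ => hρ.1)
  have hτ' : τ ∈ G ∨ (τ ∈ F ∧ ¬ IsLeaf F τ) := by
    rcases hτ with hF' | hG'
    · by_cases hl : IsLeaf F τ
      · exact Or.inl (hG.1 hl)
      · exact Or.inr ⟨hF', hl⟩
    · exact Or.inl hG'
  rcases hτ' with hτG | ⟨hτF, hnlF⟩
  · exact key G Set.subset_union_right hbG hτG (fun hl => hnl (graft_leaf_G hG hl))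
  · exact key F Set.subset_union_left hbF hτF hnlF

end Graft

section EndExtLemmas

lemma endExt_trans {S R Q : Set Str} (h1 : EndExt S R) (h2 : EndExt R Q) : EndExt S Q := by
  refine ⟨h1.1.trans h2.1, ?_⟩
  intro x hx hnx
  by_cases hxR : x ∈ R
  · exact h1.2 x hxR hnx
  · obtain ⟨ℓ, hℓ, hlx⟩ := h2.2 x hx hxR
    by_cases hℓS : ℓ ∈ S
    · exact ⟨ℓ, isLeaf_mono h1.1 hℓS hℓ, hlx⟩
    · obtain ⟨ρ, hρ, hρl⟩ := h1.2 ℓ hℓ.1 hℓS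
      exact ⟨ρ, hρ, hρl.trans hlx⟩

lemma endExt_union_left {F G₁ G₂ : Set Str} (hEE : EndExt G₁ G₂)
    (hl : ∀ ℓ, IsLeaf G₁ ℓ → IsLeaf (F ∪ G₁) ℓ) : EndExt (F ∪ G₁) (F ∪ G₂) := by
  refine ⟨Set.union_subset_union_right F hEE.1, ?_⟩
  rintro x (hx | hx) hnx
  · exact absurd (Or.inl hx) hnx
  · have hxG₁ : x ∉ G₁ := fun hmem => hnx (Or.inr hmem)
    obtain ⟨ℓ, hℓ, hlx⟩ := hEE.2 x hx hxG₁
    exact ⟨ℓ, hl ℓ hℓ, hlx⟩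

lemma endExt_of_forest {P G : Set Str} (hP : PrefixFree P) (hG : IsForestAbove P G) :
    EndExt P G := by
  refine ⟨hG.1, ?_⟩
  intro x hx _
  obtain ⟨a, ha, hax⟩ := hG.2.1 hx
  exact ⟨a, isLeaf_of_prefixFree hP ha, hax⟩

lemma isLeaf_union_right {F G : Set Str}
    (hcross : ∀ x ∈ F, ∀ y ∈ G, ¬ x <+: y ∧ ¬ y <+: x) {ℓ : Str} (h : IsLeaf G ℓ) :
    IsLeaf (F ∪ G) ℓ := by
  refine ⟨Or.inr h.1, ?_⟩
  rintro ρ (hρ | hρ) hpre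
  · exact absurd hpre (hcross ρ hρ ℓ h.1).2
  · exact h.2 ρ hρ hpre

lemma isLeaf_union_left {F G : Set Str}
    (hcross : ∀ x ∈ F, ∀ y ∈ G, ¬ x <+: y ∧ ¬ y <+: x) {ℓ : Str} (h : IsLeaf F ℓ) :
    IsLeaf (F ∪ G) ℓ := by
  refine ⟨Or.inl h.1, ?_⟩
  rintro ρ (hρ | hρ) hpre
  · exact h.2 ρ hρ hpre
  · exact absurd hpre (hcross ℓ h.1 ρ hρ).1

lemma cross_of_bases {B₁ B₂ F₁ F₂ : Set Str}
    (h1 : ∀ x ∈ F₁, ∃ a ∈ B₁, a <+: x) (h2 : ∀ y ∈ F₂, ∃ b ∈ B₂, b <+: y)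
    (hinc : ∀ a ∈ B₁, ∀ b ∈ B₂, ¬ a <+: b ∧ ¬ b <+: a) :
    ∀ x ∈ F₁, ∀ y ∈ F₂, ¬ x <+: y ∧ ¬ y <+: x := by
  intro x hx y hy
  obtain ⟨a, ha, hax⟩ := h1 x hx
  obtain ⟨b, hb, hby⟩ := h2 y hy
  constructor
  · intro hxy
    rcases pftot (hax.trans hxy) hby with hab | hba
    · exact (hinc a ha b hb).1 hab
    · exact (hinc a ha b hb).2 hba
  · intro hyx
    rcases pftot hax (hby.trans hyx) with hab | hba
    · exact (hinc a ha b hb).1 hab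
    · exact (hinc a ha b hb).2 hba

end EndExtLemmas

section Union2

lemma union₂_pack {A₁ A₂ F₁ F₂ : Set Str} {h : ℕ → ℕ}
    (hcross : ∀ x ∈ F₁, ∀ y ∈ F₂, ¬ x <+: y ∧ ¬ y <+: x)
    (h1 : IsForestAbove A₁ F₁) (h2 : IsForestAbove A₂ F₂) :
    IsForestAbove (A₁ ∪ A₂) (F₁ ∪ F₂) ∧
    leavesOf (F₁ ∪ F₂) = leavesOf F₁ ∪ leavesOf F₂ ∧
    (Bushy h F₁ → Bushy h F₂ → Bushy h (F₁ ∪ F₂)) := by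
  have hU : ∀ X Y : Set Str, X ∪ Y = ⋃ b ∈ (Set.univ : Set Bool), (bif b then X else Y) := by
    intro X Y
    rw [Set.biUnion_univ, Set.union_eq_iUnion]
  have hcross' : ∀ i ∈ (Set.univ : Set Bool), ∀ j ∈ (Set.univ : Set Bool), i ≠ j →
      ∀ x ∈ (bif i then F₁ else F₂), ∀ y ∈ (bif j then F₁ else F₂), ¬ x <+: y := by
    rintro (_|_) - (_|_) - hij x hx y hy
    · exact absurd rfl hij
    · exact (hcross y hy x hx).2
    · exact (hcross x hx y hy).1
    · exact absurd rfl hij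
  have hfor : ∀ i ∈ (Set.univ : Set Bool),
      IsForestAbove (bif i then A₁ else A₂) (bif i then F₁ else F₂) := by
    rintro (_|_) - <;> simpa
  refine ⟨?_, ?_, fun hb1 hb2 => ?_⟩
  · rw [hU A₁ A₂, hU F₁ F₂]
    exact union_forestAbove hcross' hfor
  · rw [hU F₁ F₂, union_leavesOf hcross']
    rw [show (⋃ i ∈ (Set.univ : Set Bool), leavesOf (bif i then F₁ else F₂))
      = leavesOf F₁ ∪ leavesOf F₂ from by rw [hU (leavesOf F₁) (leavesOf F₂)]; congr 1; ext b; cases b <;> simp]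
  · rw [hU F₁ F₂]
    refine union_bushy hcross' ?_
    rintro (_|_) - <;> simpa

end Union2

section PairsHelpers

lemma domP_finite {T : Set (Str × Str)} (hT : T.Finite) : (domP T).Finite := by
  apply (hT.image Prod.fst).subset
  rintro τ ⟨ρ, hρ⟩
  exact ⟨(τ, ρ), hρ, rfl⟩

lemma sec_finite {T : Set (Str × Str)} (hT : T.Finite) (τ : Str) : (sec T τ).Finite := by
  apply (hT.image Prod.snd).subset
  intro ρ hρ
  exact ⟨(τ, ρ), hρ, rfl⟩

lemma domP_prod {τ : Str} {Q : Set Str} (hQ : Q.Nonempty) : domP ({τ} ×ˢ Q) = {τ} := by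
  ext x
  constructor
  · rintro ⟨ρ, hx, -⟩
    exact hx
  · rintro rfl
    obtain ⟨q, hq⟩ := hQ
    exact ⟨q, rfl, hq⟩

lemma sec_prod {τ : Str} {Q : Set Str} : sec ({τ} ×ˢ Q) τ = Q := by
  ext ρ
  constructor
  · rintro ⟨-, hρ⟩
    exact hρ
  · intro hρ
    exact ⟨rfl, hρ⟩

lemma single_pair {τ ρ : Str} : ({(τ, ρ)} : Set (Str × Str)) = {τ} ×ˢ {ρ} :=
  (Set.singleton_prod_singleton).symm

lemma domP_single {τ ρ : Str} : domP ({(τ, ρ)} : Set (Str × Str)) = {τ} := by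
  rw [single_pair]
  exact domP_prod ⟨ρ, rfl⟩

lemma sec_single {τ ρ : Str} : sec ({(τ, ρ)} : Set (Str × Str)) τ = {ρ} := by
  rw [single_pair]
  exact sec_prod

lemma domP_empty : domP (∅ : Set (Str × Str)) = ∅ := by
  ext x
  simp [domP]

lemma bigAboveF2_empty (g h : ℕ → ℕ) (C : Set (Str × Str)) : BigAboveF2 g h ∅ C := by
  refine ⟨∅, Set.finite_empty, ⟨?_, ?_, ?_⟩, ⟨?_, ?_⟩, ?_⟩
  · rw [domP_empty]
    exact ⟨Set.Subset.rfl, Set.empty_subset _, fun σ hσ => absurd hσ (Set.notMem_empty σ)⟩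
  · intro τ hτ
    rw [domP_empty] at hτ
    exact absurd hτ (Set.notMem_empty τ)
  · intro τ hτ
    rw [domP_empty] at hτ
    exact absurd hτ (Set.notMem_empty τ)
  · intro τ hτ
    rw [domP_empty] at hτ
    exact absurd hτ (Set.notMem_empty τ)
  · intro τ hτ
    rw [domP_empty] at hτ
    exact absurd hτ (Set.notMem_empty τ)
  · intro p hp
    have := hp.1.1
    rw [domP_empty] at this
    exact absurd this (Set.notMem_empty _)

lemma sec_nonempty {T : Set (Str × Str)} {τ : Str} (h : τ ∈ domP T) : (sec T τ).Nonempty := h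

end PairsHelpers

section Glue

lemma glue_s19 (g h : ℕ → ℕ) (C : Set (Str × Str))
    (A₁ S : Set (Str × Str)) (pad : Set Str)
    (Q : Str → Set Str) (W : Str → Set (Str × Str))
    (hSfin : S.Finite)
    (hdom : IsForestAbove (domP A₁) (domP S))
    (hdombushy : Bushy g (domP S))
    (hsec : ∀ τ ∈ domP S, ∀ σ ∈ domP A₁, σ <+: τ → IsForestAbove (sec A₁ σ) (sec S τ ∪ pad))
    (hsecbushy : ∀ τ ∈ domP S, Bushy h (sec S τ ∪ pad))
    (hpadfin : pad.Finite)
    (hW : ∀ τ' ∈ leavesOf (domP S),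
      (W τ').Finite ∧ IsForestSys ({τ'} ×ˢ Q τ') (W τ') ∧ Bushy2 g h (W τ') ∧
      (∀ p, IsLeaf2 (W τ') p → p ∈ C) ∧ (Q τ').Nonempty)
    (hsecW : ∀ τ' ∈ leavesOf (domP S), ∀ τ'' ∈ domP (W τ'), ∀ σ ∈ domP A₁, σ <+: τ'' →
      IsForestAbove (sec A₁ σ) (sec S τ' ∪ sec (W τ') τ''))
    (hsecWbushy : ∀ τ' ∈ leavesOf (domP S), ∀ τ'' ∈ domP (W τ'),
      Bushy h (sec S τ' ∪ sec (W τ') τ''))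
    (he1 : ∀ τ₁ ∈ domP S, ∀ τ₂ ∈ domP S, τ₁ <+: τ₂ →
      EndExt (sec S τ₁ ∪ pad) (sec S τ₂ ∪ pad))
    (he2 : ∀ τ₁ ∈ domP S, ∀ τ' ∈ leavesOf (domP S), τ₁ <+: τ' →
      EndExt (sec S τ₁ ∪ pad) (sec S τ' ∪ sec (W τ') τ'))
    (he3 : ∀ τ' ∈ leavesOf (domP S), ∀ τ₁ ∈ domP (W τ'), ∀ τ₂ ∈ domP (W τ'), τ₁ <+: τ₂ →
      EndExt (sec S τ' ∪ sec (W τ') τ₁) (sec S τ' ∪ sec (W τ') τ₂))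
    (hleafC : ∀ τ' ∈ leavesOf (domP S), ∀ τ₂, IsLeaf (domP (W τ')) τ₂ →
      ∀ ρ, IsLeaf (sec S τ' ∪ sec (W τ') τ₂) ρ → (τ₂, ρ) ∈ C) :
    BigAboveF2 g h A₁ C := by
  -- basic facts about the W family
  have hWdomfor : ∀ τ' ∈ leavesOf (domP S), IsForestAbove {τ'} (domP (W τ')) := by
    intro τ' hτ'
    have h1 := (hW τ' hτ').2.1.1
    rwa [domP_prod (hW τ' hτ').2.2.2.2] at h1
  have hWpre : ∀ τ' ∈ leavesOf (domP S), ∀ τ'' ∈ domP (W τ'), τ' <+: τ'' := by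
    intro τ' hτ' τ'' hτ''
    obtain ⟨σ, hσ, hpre⟩ := (hWdomfor τ' hτ').2.1 hτ''
    exact hσ ▸ hpre
  have hWroot : ∀ τ' ∈ leavesOf (domP S), τ' ∈ domP (W τ') :=
    fun τ' hτ' => (hWdomfor τ' hτ').1 rfl
  have hLpf : PrefixFree (leavesOf (domP S)) := leavesOf_prefixFree _
  have huniq : ∀ τ'₁ ∈ leavesOf (domP S), ∀ τ'₂ ∈ leavesOf (domP S), ∀ τ'',
      τ'' ∈ domP (W τ'₁) → τ'' ∈ domP (W τ'₂) → τ'₁ = τ'₂ := by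
    intro τ'₁ h1 τ'₂ h2 τ'' hm1 hm2
    rcases pftot (hWpre τ'₁ h1 τ'' hm1) (hWpre τ'₂ h2 τ'' hm2) with hp | hp
    · exact hLpf τ'₁ h1 τ'₂ h2 hp
    · exact (hLpf τ'₂ h2 τ'₁ h1 hp).symm
  have hf2 : ∀ τ' ∈ leavesOf (domP S), ∀ τ'', τ'' ∈ domP S → τ'' ∈ domP (W τ') → τ'' = τ' := by
    intro τ' hτ' τ'' hd hm
    exact hτ'.2 τ'' hd (hWpre τ' hτ' τ'' hm)
  have hcrossU : ∀ i ∈ leavesOf (domP S), ∀ j ∈ leavesOf (domP S), i ≠ j →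
      ∀ x ∈ domP (W i), ∀ y ∈ domP (W j), ¬ x <+: y := by
    intro i hi j hj hij x hx y hy hpre
    rcases pftot ((hWpre i hi x hx).trans hpre) (hWpre j hj y hy) with hp | hp
    · exact hij (hLpf i hi j hj hp)
    · exact hij ((hLpf j hj i hi hp).symm)
  have hUfor : IsForestAbove (leavesOf (domP S)) (⋃ τ' ∈ leavesOf (domP S), domP (W τ')) := by
    have := union_forestAbove (Ab := fun τ' => {τ'}) hcrossU hWdomfor
    rwa [Set.biUnion_of_singleton] at this
  have hLfin : (leavesOf (domP S)).Finite := (domP_finite hSfin).subset (leavesOf_subset _)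
  have hUfin : (⋃ τ' ∈ leavesOf (domP S), domP (W τ')).Finite :=
    hLfin.biUnion (fun τ' hτ' => domP_finite (hW τ' hτ').1)
  have hDfor : IsForestAbove (domP A₁)
      (domP S ∪ ⋃ τ' ∈ leavesOf (domP S), domP (W τ')) := graft_forestAbove hdom hUfor
  have hDfin : (domP S ∪ ⋃ τ' ∈ leavesOf (domP S), domP (W τ')).Finite :=
    (domP_finite hSfin).union hUfin
  have hDbushy : Bushy g (domP S ∪ ⋃ τ' ∈ leavesOf (domP S), domP (W τ')) :=
    graft_bushy hUfor hDfin hdombushy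
      (union_bushy hcrossU (fun τ' hτ' => (hW τ' hτ').2.2.1.1))
  have hDleaves : leavesOf (domP S ∪ ⋃ τ' ∈ leavesOf (domP S), domP (W τ'))
      = ⋃ τ' ∈ leavesOf (domP S), leavesOf (domP (W τ')) := by
    rw [graft_leavesOf hUfor, union_leavesOf hcrossU]
  -- the glued system
  set R : Set (Str × Str) := {p : Str × Str |
      (p.1 ∈ domP S ∧ p.1 ∉ leavesOf (domP S) ∧ p.2 ∈ sec S p.1 ∪ pad) ∨
      ∃ τ' ∈ leavesOf (domP S), p.1 ∈ domP (W τ') ∧ p.2 ∈ sec S τ' ∪ sec (W τ') p.1}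
    with hR
  have hsecRint : ∀ τ ∈ domP S, τ ∉ leavesOf (domP S) → sec R τ = sec S τ ∪ pad := by
    intro τ hτ hτL
    ext ρ
    constructor
    · rintro (⟨-, -, hρ⟩ | ⟨τ', hτ', hmem, -⟩)
      · exact hρ
      · exact absurd ((hf2 τ' hτ' τ hτ hmem) ▸ hτ') hτL
    · intro hρ
      exact Or.inl ⟨hτ, hτL, hρ⟩
  have hsecRnew : ∀ τ' ∈ leavesOf (domP S), ∀ τ'' ∈ domP (W τ'),
      sec R τ'' = sec S τ' ∪ sec (W τ') τ'' := by
    intro τ' hτ' τ'' hτ''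
    ext ρ
    constructor
    · rintro (⟨hd, hnL, -⟩ | ⟨τ'₂, hτ'₂, hmem, hρ⟩)
      · exact absurd ((hf2 τ' hτ' τ'' hd hτ'') ▸ hτ') hnL
      · rwa [huniq τ'₂ hτ'₂ τ' hτ' τ'' hmem hτ''] at hρ
    · intro hρ
      exact Or.inr ⟨τ', hτ', hτ'', hρ⟩
  have hdomR : domP R = domP S ∪ ⋃ τ' ∈ leavesOf (domP S), domP (W τ') := by
    ext τ
    constructor
    · rintro ⟨ρ, (⟨hd, -, -⟩ | ⟨τ', hτ', hmem, -⟩)⟩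
      · exact Or.inl hd
      · exact Or.inr (Set.mem_biUnion hτ' hmem)
    · rintro (hd | hU)
      · by_cases hτL : τ ∈ leavesOf (domP S)
        · obtain ⟨ρ, hρ⟩ := sec_nonempty hd
          exact ⟨ρ, Or.inr ⟨τ, hτL, hWroot τ hτL, Or.inl hρ⟩⟩
        · obtain ⟨ρ, hρ⟩ := sec_nonempty hd
          exact ⟨ρ, Or.inl ⟨hd, hτL, Or.inl hρ⟩⟩
      · obtain ⟨τ', hτ', hmem⟩ : ∃ τ' ∈ leavesOf (domP S), τ ∈ domP (W τ') := by simpa using hU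
        obtain ⟨ρ, hρ⟩ := sec_nonempty (leavesOf_subset (domP S) hτ' : τ' ∈ domP S)
        exact ⟨ρ, Or.inr ⟨τ', hτ', hmem, Or.inl hρ⟩⟩
  have haddr : ∀ τ ∈ domP S ∪ ⋃ τ' ∈ leavesOf (domP S), domP (W τ'),
      (τ ∈ domP S ∧ τ ∉ leavesOf (domP S)) ∨
      ∃ τ' ∈ leavesOf (domP S), τ ∈ domP (W τ') := by
    rintro τ (hd | hU)
    · by_cases hτL : τ ∈ leavesOf (domP S)
      · exact Or.inr ⟨τ, hτL, hWroot τ hτL⟩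
      · exact Or.inl ⟨hd, hτL⟩
    · obtain ⟨τ', hτ', hmem⟩ : ∃ τ' ∈ leavesOf (domP S), τ ∈ domP (W τ') := by simpa using hU
      exact Or.inr ⟨τ', hτ', hmem⟩
  have hRfin : R.Finite := by
    have hsub : R ⊆ S ∪ (domP S ×ˢ pad) ∪
        ⋃ τ' ∈ leavesOf (domP S), ((domP (W τ') ×ˢ sec S τ') ∪ W τ') := by
      rintro ⟨τ, ρ⟩ (⟨hd, -, (hρ | hρ)⟩ | ⟨τ', hτ', hmem, (hρ | hρ)⟩)
      · exact Or.inl (Or.inl hρ)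
      · exact Or.inl (Or.inr ⟨hd, hρ⟩)
      · exact Or.inr (Set.mem_biUnion hτ' (Or.inl ⟨hmem, hρ⟩))
      · exact Or.inr (Set.mem_biUnion hτ' (Or.inr hρ))
    refine Set.Finite.subset ?_ hsub
    refine ((hSfin.union ((domP_finite hSfin).prod hpadfin)).union
      (hLfin.biUnion (fun τ' hτ' => ?_)))
    exact ((domP_finite (hW τ' hτ').1).prod (sec_finite hSfin τ')).union (hW τ' hτ').1
  refine ⟨R, hRfin, ⟨?_, ?_, ?_⟩, ⟨?_, ?_⟩, ?_⟩
  · rw [hdomR]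
    exact hDfor
  · intro τ hτ
    rw [hdomR] at hτ
    rcases haddr τ hτ with ⟨hd, hnL⟩ | ⟨τ', hτ', hmem⟩
    · rw [hsecRint τ hd hnL]
      exact ⟨(sec_finite hSfin τ).union hpadfin, fun σ hσ hpre => hsec τ hd σ hσ hpre⟩
    · rw [hsecRnew τ' hτ' τ hmem]
      exact ⟨(sec_finite hSfin τ').union (sec_finite (hW τ' hτ').1 τ),
        fun σ hσ hpre => hsecW τ' hτ' τ hmem σ hσ hpre⟩
  · intro τ₁ hτ₁ τ₂ hτ₂ hpre
    rw [hdomR] at hτ₁ hτ₂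
    rcases haddr τ₁ hτ₁ with ⟨hd1, hn1⟩ | ⟨τ'a, hτ'a, hm1⟩
    · rcases haddr τ₂ hτ₂ with ⟨hd2, hn2⟩ | ⟨τ'b, hτ'b, hm2⟩
      · rw [hsecRint τ₁ hd1 hn1, hsecRint τ₂ hd2 hn2]
        exact he1 τ₁ hd1 τ₂ hd2 hpre
      · have hpre' : τ₁ <+: τ'b := by
          rcases pftot hpre (hWpre τ'b hτ'b τ₂ hm2) with hp | hp
          · exact hp
          · exact absurd ((hτ'b.2 τ₁ hd1 hp) ▸ hτ'b) hn1
        rw [hsecRint τ₁ hd1 hn1, hsecRnew τ'b hτ'b τ₂ hm2]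
        exact endExt_trans (he2 τ₁ hd1 τ'b hτ'b hpre')
          (he3 τ'b hτ'b τ'b (hWroot τ'b hτ'b) τ₂ hm2 (hWpre τ'b hτ'b τ₂ hm2))
    · rcases haddr τ₂ hτ₂ with ⟨hd2, hn2⟩ | ⟨τ'b, hτ'b, hm2⟩
      · exact absurd ((hτ'a.2 τ₂ hd2 ((hWpre τ'a hτ'a τ₁ hm1).trans hpre)) ▸ hτ'a) hn2
      · have heq : τ'a = τ'b := by
          rcases pftot ((hWpre τ'a hτ'a τ₁ hm1).trans hpre) (hWpre τ'b hτ'b τ₂ hm2) with hp | hp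
          · exact hLpf τ'a hτ'a τ'b hτ'b hp
          · exact (hLpf τ'b hτ'b τ'a hτ'a hp).symm
        subst heq
        rw [hsecRnew τ'a hτ'a τ₁ hm1, hsecRnew τ'a hτ'a τ₂ hm2]
        exact he3 τ'a hτ'a τ₁ hm1 τ₂ hm2 hpre
  · rw [hdomR]
    exact hDbushy
  · intro τ hτ
    rw [hdomR] at hτ
    rcases haddr τ hτ with ⟨hd, hnL⟩ | ⟨τ', hτ', hmem⟩
    · rw [hsecRint τ hd hnL]
      exact hsecbushy τ hd
    · rw [hsecRnew τ' hτ' τ hmem]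
      exact hsecWbushy τ' hτ' τ hmem
  · rintro ⟨τ₂, ρ⟩ ⟨hd, hs⟩
    rw [hdomR] at hd
    have hd' : τ₂ ∈ leavesOf (domP S ∪ ⋃ τ' ∈ leavesOf (domP S), domP (W τ')) := hd
    rw [hDleaves] at hd'
    obtain ⟨τ', hτ', hl⟩ : ∃ τ' ∈ leavesOf (domP S), IsLeaf (domP (W τ')) τ₂ := by
      simpa [leavesOf] using hd'
    have hm2 : τ₂ ∈ domP (W τ') := hl.1
    rw [hsecRnew τ' hτ' τ₂ hm2] at hs
    exact hleafC τ' hτ' τ₂ hl ρ hs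

end Glue

lemma inner_concat (g h : ℕ → ℕ) (C : Set (Str × Str)) (hCopen : Open2 C)
    (P : Set Str) (hPfin : P.Finite) :
    ∀ τ : Str, PrefixFree P →
      (∀ ρ ∈ P, ∀ τ', τ <+: τ' → BigAboveF2 g h {(τ', ρ)} C) →
      BigAboveF2 g h ({τ} ×ˢ P) C := by
  refine Set.Finite.induction_on P hPfin ?_ ?_
  · intro τ _ _
    rw [Set.prod_empty]
    exact bigAboveF2_empty g h C
  intro ρ₀ P' hρ₀ hP'fin IH τ hpf hbig
  obtain ⟨S, hSfin, hSsys, hSbushy, hSleaf⟩ := hbig ρ₀ (Set.mem_insert _ _) τ List.prefix_rfl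
  rcases Set.eq_empty_or_nonempty P' with rfl | hP'
  · have hone : ({τ} ×ˢ insert ρ₀ (∅ : Set Str)) = {(τ, ρ₀)} := by
      ext ⟨x, y⟩
      simp [Set.mem_prod, and_comm]
    rw [hone]
    exact ⟨S, hSfin, hSsys, hSbushy, hSleaf⟩
  -- facts about S
  have hdomS : IsForestAbove {τ} (domP S) := by
    have := hSsys.1
    rwa [domP_single] at this
  have hpreS : ∀ τ'' ∈ domP S, τ <+: τ'' := by
    intro τ'' hτ''
    obtain ⟨σ, hσ, hpre⟩ := hdomS.2.1 hτ''
    exact hσ ▸ hpre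
  have hsecS : ∀ τ'' ∈ domP S, IsForestAbove {ρ₀} (sec S τ'') := by
    intro τ'' hτ''
    have := (hSsys.2.1 τ'' hτ'').2 τ (by rw [domP_single]; rfl) (hpreS τ'' hτ'')
    rwa [sec_single] at this
  have hpfP' : PrefixFree P' := prefixFree_mono (Set.subset_insert _ _) hpf
  have hinc : ∀ a ∈ ({ρ₀} : Set Str), ∀ b ∈ P', ¬ a <+: b ∧ ¬ b <+: a := by
    rintro a rfl b hb
    constructor
    · intro hab
      exact hρ₀ ((hpf a (Set.mem_insert _ _) b (Set.mem_insert_of_mem _ hb) hab) ▸ hb)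
    · intro hba
      exact hρ₀ ((hpf b (Set.mem_insert_of_mem _ hb) a (Set.mem_insert _ _) hba).symm ▸ hb)
  have hcrossP : ∀ τ'' ∈ domP S, ∀ x ∈ sec S τ'', ∀ y ∈ P', ¬ x <+: y ∧ ¬ y <+: x :=
    fun τ'' hτ'' => cross_of_bases (hsecS τ'' hτ'').2.1
      (fun y hy => ⟨y, hy, List.prefix_rfl⟩) hinc
  -- the family of systems from the inductive hypothesis
  have hex : ∀ τ' : Str, ∃ W', τ' ∈ leavesOf (domP S) →
      W'.Finite ∧ IsForestSys ({τ'} ×ˢ P') W' ∧ Bushy2 g h W' ∧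
      ∀ p, IsLeaf2 W' p → p ∈ C := by
    intro τ'
    by_cases hτ' : τ' ∈ leavesOf (domP S)
    · obtain ⟨W', h1, h2, h3, h4⟩ := IH τ' hpfP'
        (fun ρ hρ τ₂ hpre2 => hbig ρ (Set.mem_insert_of_mem _ hρ) τ₂
          ((hpreS τ' (leavesOf_subset _ hτ')).trans hpre2))
      exact ⟨W', fun _ => ⟨h1, h2, h3, h4⟩⟩
    · exact ⟨∅, fun hmem => absurd hmem hτ'⟩
  choose W hWp using hex
  have hdomWfor : ∀ τ' ∈ leavesOf (domP S), IsForestAbove {τ'} (domP (W τ')) := by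
    intro τ' hτ'
    have := ((hWp τ' hτ').2.1).1
    rwa [domP_prod hP'] at this
  have hWpre : ∀ τ' ∈ leavesOf (domP S), ∀ τ'' ∈ domP (W τ'), τ' <+: τ'' := by
    intro τ' hτ' τ'' hm
    obtain ⟨σ, hσ, hpre⟩ := (hdomWfor τ' hτ').2.1 hm
    exact hσ ▸ hpre
  have hWroot : ∀ τ' ∈ leavesOf (domP S), τ' ∈ domP (W τ') :=
    fun τ' hτ' => (hdomWfor τ' hτ').1 rfl
  have hWsec : ∀ τ' ∈ leavesOf (domP S), ∀ τ'' ∈ domP (W τ'),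
      IsForestAbove P' (sec (W τ') τ'') := by
    intro τ' hτ' τ'' hm
    have hsys := (hWp τ' hτ').2.1
    have := (hsys.2.1 τ'' hm).2 τ' (by rw [domP_prod hP']; rfl) (hWpre τ' hτ' τ'' hm)
    rwa [sec_prod] at this
  have hcrossSW : ∀ τ₁ ∈ domP S, ∀ τ' ∈ leavesOf (domP S), ∀ τ'' ∈ domP (W τ'),
      ∀ x ∈ sec S τ₁, ∀ y ∈ sec (W τ') τ'', ¬ x <+: y ∧ ¬ y <+: x := by
    intro τ₁ h1 τ' hτ' τ'' hm
    exact cross_of_bases (hsecS τ₁ h1).2.1 (hWsec τ' hτ' τ'' hm).2.1 hinc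
  -- apply the glue lemma
  have hmain := glue_s19 g h C ({τ} ×ˢ insert ρ₀ P') S P' (fun _ => P') W hSfin ?_ ?_ ?_ ?_ ?_ ?_ ?_ ?_ ?_ ?_ ?_ ?_
  · exact hmain
  · rw [domP_prod (Set.insert_nonempty _ _)]
    exact hdomS
  · exact hSbushy.1
  · intro τ'' hd σ hσ hpre
    rw [domP_prod (Set.insert_nonempty _ _)] at hσ
    rcases hσ with rfl
    rw [sec_prod]
    have := (union₂_pack (h := h) (hcrossP τ'' hd) (hsecS τ'' hd) (forest_self hpfP')).1
    rwa [Set.singleton_union] at this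
  · intro τ'' hd
    exact (union₂_pack (h := h) (hcrossP τ'' hd) (hsecS τ'' hd) (forest_self hpfP')).2.2
      (hSbushy.2 τ'' hd) (bushy_self hpfP' h)
  · exact hP'fin
  · intro τ' hτ'
    obtain ⟨h1, h2, h3, h4⟩ := hWp τ' hτ'
    exact ⟨h1, h2, h3, h4, hP'⟩
  · intro τ' hτ' τ'' hm σ hσ hpre
    rw [domP_prod (Set.insert_nonempty _ _)] at hσ
    rcases hσ with rfl
    rw [sec_prod]
    have := (union₂_pack (h := h) (hcrossSW τ' (leavesOf_subset _ hτ') τ' hτ' τ'' hm)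
      (hsecS τ' (leavesOf_subset _ hτ')) (hWsec τ' hτ' τ'' hm)).1
    rwa [Set.singleton_union] at this
  · intro τ' hτ' τ'' hm
    exact (union₂_pack (h := h) (hcrossSW τ' (leavesOf_subset _ hτ') τ' hτ' τ'' hm)
      (hsecS τ' (leavesOf_subset _ hτ')) (hWsec τ' hτ' τ'' hm)).2.2
      (hSbushy.2 τ' (leavesOf_subset _ hτ')) ((hWp τ' hτ').2.2.1.2 τ'' hm)
  · intro τ₁ h1 τ₂ h2 hpre
    rw [Set.union_comm (sec S τ₁) P', Set.union_comm (sec S τ₂) P']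
    refine endExt_union_left (hSsys.2.2 τ₁ h1 τ₂ h2 hpre) ?_
    intro ℓ hℓ
    exact isLeaf_union_right (fun x hx y hy => (hcrossP τ₁ h1 y hy x hx).symm) hℓ
  · intro τ₁ h1 τ' hτ' hpre
    refine endExt_trans (R := sec S τ' ∪ P') ?_ ?_
    · rw [Set.union_comm (sec S τ₁) P', Set.union_comm (sec S τ') P']
      refine endExt_union_left (hSsys.2.2 τ₁ h1 τ' (leavesOf_subset _ hτ') hpre) ?_
      intro ℓ hℓ
      exact isLeaf_union_right (fun x hx y hy => (hcrossP τ₁ h1 y hy x hx).symm) hℓ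
    · refine endExt_union_left (endExt_of_forest hpfP' (hWsec τ' hτ' τ' (hWroot τ' hτ'))) ?_
      intro ℓ hℓ
      exact isLeaf_union_right (hcrossP τ' (leavesOf_subset _ hτ')) hℓ
  · intro τ' hτ' τ₁ hm1 τ₂ hm2 hpre
    refine endExt_union_left ((hWp τ' hτ').2.1.2.2 τ₁ hm1 τ₂ hm2 hpre) ?_
    intro ℓ hℓ
    exact isLeaf_union_right (hcrossSW τ' (leavesOf_subset _ hτ') τ' hτ' τ₁ hm1) hℓ
  · intro τ' hτ' τ₂ hl2 ρ hρleaf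
    have hdec := (union₂_pack (h := h) (hcrossSW τ' (leavesOf_subset _ hτ') τ' hτ' τ₂ hl2.1)
      (hsecS τ' (leavesOf_subset _ hτ')) (hWsec τ' hτ' τ₂ hl2.1)).2.1
    have hρ' : ρ ∈ leavesOf (sec S τ' ∪ sec (W τ') τ₂) := hρleaf
    rw [hdec] at hρ'
    rcases hρ' with hρ' | hρ'
    · have hmem : (τ', ρ) ∈ C := hSleaf (τ', ρ) ⟨hτ', hρ'⟩
      exact hCopen (τ', ρ) hmem (τ₂, ρ) (hWpre τ' hτ' τ₂ hl2.1) List.prefix_rfl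
    · exact (hWp τ' hτ').2.2.2 (τ₂, ρ) ⟨hl2, hρ'⟩

end WCAux

/-- Weak concatenation property for pairs: if `B` is `(g, h)`-big above `A`,
`C` is open, and for every `(τ, ρ) ∈ B` and every `τ'` extending `τ` the set
`C` is `(g, h)`-big above `(τ', ρ)`, then `C` is `(g, h)`-big above `A`. -/
theorem weak_concatenation_pairs (g h : ℕ → ℕ) (hg : Bounding g) (hh : Bounding h)
    (A B C : Set (Str × Str)) (hCopen : Open2 C)
    (hB : BigAbove2 g h A B)
    (hC : ∀ p ∈ B, ∀ τ' : Str, p.1 <+: τ' → BigAboveF2 g h {(τ', p.2)} C) :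
    BigAbove2 g h A C := by
  intro A' hA'sub hA'fin hA'pf
  obtain ⟨T, hTfin, hTsys, hTbushy, hTleaf⟩ := hB A' hA'sub hA'fin hA'pf
  have hex : ∀ τ' : Str, ∃ W', τ' ∈ leavesOf (domP T) →
      W'.Finite ∧ IsForestSys ({τ'} ×ˢ leavesOf (sec T τ')) W' ∧ Bushy2 g h W' ∧
      ∀ p, IsLeaf2 W' p → p ∈ C := by
    intro τ'
    by_cases hτ' : τ' ∈ leavesOf (domP T)
    · obtain ⟨W', h1, h2, h3, h4⟩ := inner_concat g h C hCopen (leavesOf (sec T τ'))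
        ((sec_finite hTfin τ').subset (leavesOf_subset _)) τ' (leavesOf_prefixFree _)
        (fun ρ hρ τ₂ hpre2 => hC (τ', ρ) (hTleaf (τ', ρ) ⟨hτ', hρ⟩) τ₂ hpre2)
      exact ⟨W', fun _ => ⟨h1, h2, h3, h4⟩⟩
    · exact ⟨∅, fun hmem => absurd hmem hτ'⟩
  choose W hWp using hex
  have hQne : ∀ τ' ∈ leavesOf (domP T), (leavesOf (sec T τ')).Nonempty := by
    intro τ' hτ'
    obtain ⟨ρ, hρ⟩ := sec_nonempty (leavesOf_subset _ hτ' : τ' ∈ domP T)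
    obtain ⟨ℓ, hℓ, -⟩ := exists_leaf_above (sec_finite hTfin τ') hρ
    exact ⟨ℓ, hℓ⟩
  have hdomWfor : ∀ τ' ∈ leavesOf (domP T), IsForestAbove {τ'} (domP (W τ')) := by
    intro τ' hτ'
    have := ((hWp τ' hτ').2.1).1
    rwa [domP_prod (hQne τ' hτ')] at this
  have hWpre : ∀ τ' ∈ leavesOf (domP T), ∀ τ'' ∈ domP (W τ'), τ' <+: τ'' := by
    intro τ' hτ' τ'' hm
    obtain ⟨σ, hσ, hpre⟩ := (hdomWfor τ' hτ').2.1 hm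
    exact hσ ▸ hpre
  have hWroot : ∀ τ' ∈ leavesOf (domP T), τ' ∈ domP (W τ') :=
    fun τ' hτ' => (hdomWfor τ' hτ').1 rfl
  have hWsec : ∀ τ' ∈ leavesOf (domP T), ∀ τ'' ∈ domP (W τ'),
      IsForestAbove (leavesOf (sec T τ')) (sec (W τ') τ'') := by
    intro τ' hτ' τ'' hm
    have hsys := (hWp τ' hτ').2.1
    have := (hsys.2.1 τ'' hm).2 τ' (by rw [domP_prod (hQne τ' hτ')]; rfl)
      (hWpre τ' hτ' τ'' hm)
    rwa [sec_prod] at this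
  have hsecTfor : ∀ τ'' ∈ domP T, ∀ σ ∈ domP A', σ <+: τ'' →
      IsForestAbove (sec A' σ) (sec T τ'') :=
    fun τ'' hm σ hσ hp => (hTsys.2.1 τ'' hm).2 σ hσ hp
  have hστ' : ∀ σ ∈ domP A', ∀ τ' ∈ leavesOf (domP T), ∀ τ'' ∈ domP (W τ'),
      σ <+: τ'' → σ <+: τ' := by
    intro σ hσ τ' hτ' τ'' hm hpre
    rcases pftot hpre (hWpre τ' hτ' τ'' hm) with hp | hp
    · exact hp
    · exact (hτ'.2 σ (hTsys.1.1 hσ) hp) ▸ List.prefix_rfl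
  have hmain := glue_s19 g h C A' T ∅ (fun τ' => leavesOf (sec T τ')) W hTfin
    hTsys.1 hTbushy.1 ?_ ?_ Set.finite_empty ?_ ?_ ?_ ?_ ?_ ?_ ?_
  · exact hmain
  · intro τ'' hd σ hσ hpre
    rw [Set.union_empty]
    exact hsecTfor τ'' hd σ hσ hpre
  · intro τ'' hd
    rw [Set.union_empty]
    exact hTbushy.2 τ'' hd
  · intro τ' hτ'
    obtain ⟨h1, h2, h3, h4⟩ := hWp τ' hτ'
    exact ⟨h1, h2, h3, h4, hQne τ' hτ'⟩
  · intro τ' hτ' τ'' hm σ hσ hpre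
    exact graft_forestAbove
      (hsecTfor τ' (leavesOf_subset _ hτ') σ hσ (hστ' σ hσ τ' hτ' τ'' hm hpre))
      (hWsec τ' hτ' τ'' hm)
  · intro τ' hτ' τ'' hm
    exact graft_bushy (hWsec τ' hτ' τ'' hm)
      ((sec_finite hTfin τ').union (sec_finite (hWp τ' hτ').1 τ''))
      (hTbushy.2 τ' (leavesOf_subset _ hτ')) ((hWp τ' hτ').2.2.1.2 τ'' hm)
  · intro τ₁ h1 τ₂ h2 hpre
    rw [Set.union_empty, Set.union_empty]
    exact hTsys.2.2 τ₁ h1 τ₂ h2 hpre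
  · intro τ₁ h1 τ' hτ' hpre
    rw [Set.union_empty]
    exact endExt_trans (hTsys.2.2 τ₁ h1 τ' (leavesOf_subset _ hτ') hpre)
      (graft_endExt (hWsec τ' hτ' τ' (hWroot τ' hτ')))
  · intro τ' hτ' τ₁ hm1 τ₂ hm2 hpre
    exact endExt_union_left ((hWp τ' hτ').2.1.2.2 τ₁ hm1 τ₂ hm2 hpre)
      (fun ℓ hℓ => graft_leaf_G (hWsec τ' hτ' τ₁ hm1) hℓ)
  · intro τ' hτ' τ₂ hl2 ρ hρleaf
    have hρ' : ρ ∈ leavesOf (sec T τ' ∪ sec (W τ') τ₂) := hρleaf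
    rw [graft_leavesOf (hWsec τ' hτ' τ₂ hl2.1)] at hρ'
    exact (hWp τ' hτ').2.2.2 (τ₂, ρ) ⟨hl2, hρ'⟩
end
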